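/- arXiv:2009.08335 — 2 statements merged into one kernel-verified Lean document; each statement's English description precedes it below -/
import Mathlib

section
/- Let f : ℝ^n → ℝ be μ-strongly convex and L-smooth, and A ∈ ℝ^{p×n}. Then the function d(w) = f*(Aᵀw), where f* is the convex conjugate of f, is differentiable and λ_max(AAᵀ)/μ-smooth, and it is λ_min(AAᵀ)/L-strongly convex. -/
open scoped RealInnerProductSpace

def IsSmoothFn {n : ℕ} (L : ℝ) (f : EuclideanSpace ℝ (Fin n) → ℝ) : Prop :=
  ∃ f' : EuclideanSpace ℝ (Fin n) → EuclideanSpace ℝ (Fin n),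
    (∀ x, HasGradientAt f (f' x) x) ∧ LipschitzWith L.toNNReal f'

noncomputable def conjFn {n : ℕ} (f : EuclideanSpace ℝ (Fin n) → ℝ)
    (w : EuclideanSpace ℝ (Fin n)) : ℝ :=
  ⨆ x, ⟪w, x⟫ - f x

set_option linter.unusedSectionVars false
set_option maxHeartbeats 1000000

open InnerProductSpace


variable {E : Type*} [NormedAddCommGroup E] [InnerProductSpace ℝ E] [CompleteSpace E]

-- derivative along a line
lemma line_hasDerivAt {g : E → ℝ} {g' : E → E} (hg : ∀ z, HasGradientAt g (g' z) z)
    (x v : E) (t : ℝ) :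
    HasDerivAt (fun s : ℝ => g (x + s • v)) ⟪g' (x + t • v), v⟫ t := by
  have h1 : HasDerivAt (fun s : ℝ => x + s • v) v t := by
    simpa using ((hasDerivAt_id t).smul_const v).const_add x
  have h2 := (hg (x + t • v)).hasFDerivAt.comp_hasDerivAt t h1
  have h3 : HasDerivAt (fun s : ℝ => g (x + s • v)) ((toDual ℝ E (g' (x + t • v))) v) t := h2
  simpa [toDual_apply_apply] using h3

-- convexity + gradient ⇒ first-order lower bound
lemma convex_first_order {g : E → ℝ} {g' : E → E} (hg : ∀ z, HasGradientAt g (g' z) z)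
    (hc : ConvexOn ℝ Set.univ g) (x y : E) :
    g x + ⟪g' x, y - x⟫ ≤ g y := by
  set φ : ℝ → ℝ := fun s => g (x + s • (y - x)) with hφ
  have hconv : ConvexOn ℝ Set.univ φ := by
    have := hc.comp_affineMap (AffineMap.lineMap x y : ℝ →ᵃ[ℝ] E)
    have he : ∀ s : ℝ, (AffineMap.lineMap x y : ℝ →ᵃ[ℝ] E) s = x + s • (y - x) := by
      intro s; simp [AffineMap.lineMap_apply]; module
    convert this.subset (by simp) (convex_univ) using 1
    · rfl
    · rfl
    · rfl
    · rfl
    funext s; simp [φ, he s]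
  have hderiv : HasDerivAt φ ⟪g' x, y - x⟫ 0 := by
    simpa using line_hasDerivAt hg x (y - x) 0
  have hslope := hconv.le_slope_of_hasDerivAt (Set.mem_univ (0:ℝ)) (Set.mem_univ (1:ℝ))
    one_pos hderiv
  rw [slope_def_field] at hslope
  simp only [φ] at hslope
  simp only [zero_smul, add_zero, one_smul] at hslope
  have : x + (y - x) = y := by abel
  rw [this] at hslope
  have := hslope
  simp [div_one] at this ⊢
  linarith [this]
lemma convex_of_monotone_grad {g : E → ℝ} {g' : E → E} (hg : ∀ z, HasGradientAt g (g' z) z)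
    (hm : ∀ x y : E, 0 ≤ ⟪g' y - g' x, y - x⟫) : ConvexOn ℝ Set.univ g := by
  refine ⟨convex_univ, ?_⟩
  rintro x - y - a b ha hb hab
  set φ : ℝ → ℝ := fun s => g (x + s • (y - x)) with hφ
  set ψ : ℝ → ℝ := fun s => ⟪g' (x + s • (y - x)), y - x⟫ with hψ
  have hd : ∀ t, HasDerivAt φ (ψ t) t := fun t => line_hasDerivAt hg x (y - x) t
  have hmono : Monotone ψ := by
    intro s t hst
    rcases eq_or_lt_of_le hst with rfl | hlt
    · exact le_refl _
    · have key := hm (x + s • (y - x)) (x + t • (y - x))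
      have he : (x + t • (y - x)) - (x + s • (y - x)) = (t - s) • (y - x) := by module
      rw [he, real_inner_smul_right] at key
      have h1 : 0 ≤ ⟪g' (x + t • (y - x)) - g' (x + s • (y - x)), y - x⟫ :=
        nonneg_of_mul_nonneg_right key (by linarith)
      rw [inner_sub_left] at h1
      simp only [ψ]; linarith
  have hφc : ConvexOn ℝ Set.univ φ := by
    have hdiff : Differentiable ℝ φ := fun t => (hd t).differentiableAt
    have hdm : Monotone (deriv φ) := by
      have : deriv φ = ψ := funext fun t => (hd t).deriv
      rw [this]; exact hmono
    exact hdm.convexOn_univ_of_deriv hdiff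
  have h01 := hφc.2 (Set.mem_univ (0:ℝ)) (Set.mem_univ (1:ℝ)) ha hb hab
  simp only [smul_eq_mul, mul_zero, mul_one, zero_add] at h01
  have e0 : φ 0 = g x := by simp [φ]
  have e1 : φ 1 = g y := by simp [φ]
  have eb : φ b = g (a • x + b • y) := by
    simp only [φ]; congr 1
    have : a = 1 - b := by linarith
    rw [this]; module
  rw [e0, e1, eb] at h01
  simpa using h01
lemma hasGradientAt_const_mul_normSq (c : ℝ) (x : E) :
    HasGradientAt (fun z : E => c * ‖z‖ ^ 2) ((2 * c) • x) x := by
  have h1 : HasFDerivAt (fun z : E => ⟪z, z⟫)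
      ((fderivInnerCLM ℝ (x, x)).comp ((ContinuousLinearMap.id ℝ E).prod
        (ContinuousLinearMap.id ℝ E))) x :=
    (hasFDerivAt_id x).inner ℝ (hasFDerivAt_id x)
  have h2 : HasFDerivAt (fun z : E => c * ⟪z, z⟫)
      (c • ((fderivInnerCLM ℝ (x, x)).comp ((ContinuousLinearMap.id ℝ E).prod
        (ContinuousLinearMap.id ℝ E)))) x := h1.const_mul c
  have he : (c • ((fderivInnerCLM ℝ (x, x)).comp ((ContinuousLinearMap.id ℝ E).prod
        (ContinuousLinearMap.id ℝ E)))) = toDual ℝ E ((2 * c) • x) := by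
    ext v
    simp [fderivInnerCLM_apply, toDual_apply_apply, real_inner_smul_left, real_inner_comm]
    ring
  rw [he] at h2
  have h3 : (fun z : E => c * ‖z‖ ^ 2) = fun z : E => c * ⟪z, z⟫ := by
    funext z; rw [real_inner_self_eq_norm_sq]
  rw [h3]
  exact hasGradientAt_iff_hasFDerivAt.mpr h2

lemma HasGradientAt.sub'' {f g : E → ℝ} {a b x : E} (hf : HasGradientAt f a x)
    (hg : HasGradientAt g b x) : HasGradientAt (fun z => f z - g z) (a - b) x := by
  rw [hasGradientAt_iff_hasFDerivAt, map_sub]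
  exact hf.hasFDerivAt.sub hg.hasFDerivAt

lemma hasGradientAt_inner_const (y x : E) : HasGradientAt (fun z : E => ⟪y, z⟫) y x := by
  rw [hasGradientAt_iff_hasFDerivAt]
  exact (toDual ℝ E y).hasFDerivAt

section StrongSmooth
variable {f : E → ℝ} {f' : E → E} {μ L : ℝ}

lemma strong_first_order (hμ : 0 < μ) (hsc : StrongConvexOn Set.univ μ f)
    (hf : ∀ z, HasGradientAt f (f' z) z) (x y : E) :
    f x + ⟪f' x, y - x⟫ + μ / 2 * ‖y - x‖ ^ 2 ≤ f y := by
  have hconv : ConvexOn ℝ Set.univ (fun z => f z - μ / 2 * ‖z‖ ^ 2) :=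
    strongConvexOn_iff_convex.mp hsc
  have hgrad : ∀ z : E, HasGradientAt (fun w => f w - μ / 2 * ‖w‖ ^ 2) (f' z - μ • z) z := by
    intro z
    have := (hf z).sub'' (hasGradientAt_const_mul_normSq (μ / 2) z)
    have h2 : (2 * (μ / 2)) • z = μ • z := by rw [show (2 * (μ / 2)) = μ by ring]
    rwa [h2] at this
  have := convex_first_order hgrad hconv x y
  have hn : ‖y - x‖ ^ 2 = ‖y‖ ^ 2 - 2 * ⟪y, x⟫ + ‖x‖ ^ 2 := norm_sub_sq_real y x
  have hi : ⟪f' x - μ • x, y - x⟫ = ⟪f' x, y - x⟫ - μ * (⟪y, x⟫ - ‖x‖ ^ 2) := by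
    simp only [inner_sub_left, inner_sub_right, real_inner_smul_left,
      real_inner_self_eq_norm_sq, real_inner_comm x y]
    ring
  rw [hi] at this
  nlinarith [this]

lemma strong_monotone (hμ : 0 < μ) (hsc : StrongConvexOn Set.univ μ f)
    (hf : ∀ z, HasGradientAt f (f' z) z) (x y : E) :
    μ * ‖y - x‖ ^ 2 ≤ ⟪f' y - f' x, y - x⟫ := by
  have h1 := strong_first_order hμ hsc hf x y
  have h2 := strong_first_order hμ hsc hf y x
  have e1 : ⟪f' y, x - y⟫ = -⟪f' y, y - x⟫ := by
    rw [show x - y = -(y - x) by abel, inner_neg_right]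
  have e2 : ‖x - y‖ = ‖y - x‖ := norm_sub_rev x y
  rw [e1, e2] at h2
  rw [inner_sub_left]
  linarith

lemma descent_lemma (hL : 0 < L) (hf : ∀ z, HasGradientAt f (f' z) z)
    (hlip : LipschitzWith L.toNNReal f') (x y : E) :
    f y ≤ f x + ⟪f' x, y - x⟫ + L / 2 * ‖y - x‖ ^ 2 := by
  have hgrad : ∀ z : E, HasGradientAt (fun w => L / 2 * ‖w‖ ^ 2 - f w) (L • z - f' z) z := by
    intro z
    have := (hasGradientAt_const_mul_normSq (L / 2) z).sub'' (hf z)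
    have h2 : (2 * (L / 2)) • z = L • z := by rw [show (2 * (L / 2)) = L by ring]
    rwa [h2] at this
  have hmono : ∀ x y : E, 0 ≤ ⟪(L • y - f' y) - (L • x - f' x), y - x⟫ := by
    intro x y
    have e : (L • y - f' y) - (L • x - f' x) = L • (y - x) - (f' y - f' x) := by module
    rw [e, inner_sub_left, real_inner_smul_left, real_inner_self_eq_norm_sq]
    have hcs : ⟪f' y - f' x, y - x⟫ ≤ ‖f' y - f' x‖ * ‖y - x‖ := real_inner_le_norm _ _
    have hl : ‖f' y - f' x‖ ≤ L * ‖y - x‖ := by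
      have := hlip.dist_le_mul y x
      rwa [dist_eq_norm, dist_eq_norm, Real.coe_toNNReal L hL.le] at this
    nlinarith [norm_nonneg (y - x), norm_nonneg (f' y - f' x)]
  have hconv := convex_of_monotone_grad hgrad hmono
  have := convex_first_order hgrad hconv x y
  have hn : ‖y - x‖ ^ 2 = ‖y‖ ^ 2 - 2 * ⟪y, x⟫ + ‖x‖ ^ 2 := norm_sub_sq_real y x
  have hi : ⟪L • x - f' x, y - x⟫ = L * (⟪y, x⟫ - ‖x‖ ^ 2) - ⟪f' x, y - x⟫ := by
    simp only [inner_sub_left, inner_sub_right, real_inner_smul_left,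
      real_inner_self_eq_norm_sq, real_inner_comm x y]
    ring
  rw [hi] at this
  nlinarith [this]

end StrongSmooth

noncomputable def conj' (f : E → ℝ) (y : E) : ℝ := ⨆ x, ⟪y, x⟫ - f x

section Conj
variable [FiniteDimensional ℝ E] {f : E → ℝ} {f' : E → E} {μ L : ℝ}

lemma exists_argmax (hμ : 0 < μ) (hsc : StrongConvexOn Set.univ μ f)
    (hf : ∀ z, HasGradientAt f (f' z) z) (y : E) :
    ∃ x : E, f' x = y ∧ ∀ z, ⟪y, z⟫ - f z ≤ ⟪y, x⟫ - f x := by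
  set g : E → ℝ := fun z => f z - ⟪y, z⟫ with hg
  have hgrad : ∀ z : E, HasGradientAt g (f' z - y) z := fun z =>
    (hf z).sub'' (hasGradientAt_inner_const y z)
  have hgc : Continuous g := by
    have hfc : Continuous f := by
      rw [continuous_iff_continuousAt]; exact fun z => (hf z).continuousAt
    exact hfc.sub (continuous_const.inner continuous_id)
  set c : ℝ := ‖f' 0 - y‖ with hc
  have hbound : ∀ z : E, f 0 - c * ‖z‖ + μ / 2 * ‖z‖ ^ 2 ≤ g z := by
    intro z
    have h1 := strong_first_order hμ hsc hf 0 z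
    simp only [sub_zero] at h1
    have h2 : ⟪f' 0 - y, z⟫ ≤ g z - f 0 - μ / 2 * ‖z‖ ^ 2 := by
      rw [inner_sub_left]; simp only [g]; linarith
    have h3 : -(c * ‖z‖) ≤ ⟪f' 0 - y, z⟫ := by
      have := abs_real_inner_le_norm (f' 0 - y) z
      have := neg_abs_le ⟪f' 0 - y, z⟫
      nlinarith [abs_real_inner_le_norm (f' 0 - y) z]
    linarith
  have hcoer : Filter.Tendsto g (Filter.cocompact E) Filter.atTop := by
    have hq : Filter.Tendsto (fun r : ℝ => f 0 - c * r + μ / 2 * r ^ 2)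
        Filter.atTop Filter.atTop := by
      have h1 : Filter.Tendsto (fun r : ℝ => μ / 2 * r + -c) Filter.atTop Filter.atTop :=
        Filter.tendsto_atTop_add_const_right _ (-c)
          (Filter.Tendsto.const_mul_atTop (half_pos hμ) Filter.tendsto_id)
      have h2 : Filter.Tendsto (fun r : ℝ => r * (μ / 2 * r + -c)) Filter.atTop Filter.atTop :=
        Filter.Tendsto.atTop_mul_atTop₀ Filter.tendsto_id h1
      have h3 : (fun r : ℝ => f 0 - c * r + μ / 2 * r ^ 2)
          = fun r : ℝ => r * (μ / 2 * r + -c) + f 0 := by funext r; ring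
      rw [h3]
      exact Filter.tendsto_atTop_add_const_right _ _ h2
    have hnorm : Filter.Tendsto (fun z : E => ‖z‖) (Filter.cocompact E) Filter.atTop :=
      tendsto_norm_cocompact_atTop
    exact Filter.tendsto_atTop_mono hbound (hq.comp hnorm)
  obtain ⟨x, hx⟩ := hgc.exists_forall_le hcoer
  refine ⟨x, ?_, fun z => by have := hx z; simp only [g] at this; linarith⟩
  have hloc : IsLocalMin g x := Filter.Eventually.of_forall hx
  have hz := hloc.hasFDerivAt_eq_zero (hgrad x).hasFDerivAt
  have : f' x - y = 0 := by
    have := congrArg (InnerProductSpace.toDual ℝ E).symm hz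
    simpa using this
  rwa [sub_eq_zero] at this

variable {T : E → E}

lemma conj_eq (hT : ∀ y z, ⟪y, z⟫ - f z ≤ ⟪y, T y⟫ - f (T y)) (y : E) :
    conj' f y = ⟪y, T y⟫ - f (T y) := by
  have hbdd : BddAbove (Set.range fun x => ⟪y, x⟫ - f x) :=
    ⟨⟪y, T y⟫ - f (T y), by rintro r ⟨x, rfl⟩; exact hT y x⟩
  exact le_antisymm (ciSup_le (hT y)) (le_ciSup hbdd (T y))

lemma le_conj (hT : ∀ y z, ⟪y, z⟫ - f z ≤ ⟪y, T y⟫ - f (T y)) (y x : E) :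
    ⟪y, x⟫ - f x ≤ conj' f y := by
  have hbdd : BddAbove (Set.range fun x => ⟪y, x⟫ - f x) :=
    ⟨⟪y, T y⟫ - f (T y), by rintro r ⟨x, rfl⟩; exact hT y x⟩
  exact le_ciSup hbdd x

lemma T_lipschitz (hμ : 0 < μ) (hsc : StrongConvexOn Set.univ μ f)
    (hf : ∀ z, HasGradientAt f (f' z) z) (hT1 : ∀ y, f' (T y) = y) (y z : E) :
    ‖T z - T y‖ ≤ μ⁻¹ * ‖z - y‖ := by
  have key := strong_monotone hμ hsc hf (T y) (T z)
  rw [hT1 y, hT1 z] at key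
  have hcs : ⟪z - y, T z - T y⟫ ≤ ‖z - y‖ * ‖T z - T y‖ := real_inner_le_norm _ _
  have hmain : μ * ‖T z - T y‖ ≤ ‖z - y‖ := by
    rcases eq_or_lt_of_le (norm_nonneg (T z - T y)) with h0 | h0
    · rw [← h0]; simp [norm_nonneg]
    · have := mul_le_mul_of_nonneg_right (le_trans key hcs) (le_of_lt (inv_pos.mpr h0))
      calc μ * ‖T z - T y‖ = μ * ‖T z - T y‖ ^ 2 * ‖T z - T y‖⁻¹ := by
            field_simp
        _ ≤ ‖z - y‖ * ‖T z - T y‖ * ‖T z - T y‖⁻¹ := by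
            apply mul_le_mul_of_nonneg_right _ (le_of_lt (inv_pos.mpr h0))
            exact le_trans key hcs
        _ = ‖z - y‖ := by field_simp
  calc ‖T z - T y‖ = μ⁻¹ * (μ * ‖T z - T y‖) := by field_simp
    _ ≤ μ⁻¹ * ‖z - y‖ := by
        exact mul_le_mul_of_nonneg_left hmain (le_of_lt (inv_pos.mpr hμ))

end Conj

section Conj2
set_option linter.unusedSectionVars false
variable [FiniteDimensional ℝ E] {f : E → ℝ} {f' : E → E} {μ L : ℝ} {T : E → E}

lemma conj_sandwich (hsc : StrongConvexOn Set.univ μ f) (hμ : 0 < μ)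
    (hf : ∀ z, HasGradientAt f (f' z) z)
    (hT1 : ∀ y, f' (T y) = y) (hT : ∀ y z, ⟪y, z⟫ - f z ≤ ⟪y, T y⟫ - f (T y)) (y z : E) :
    0 ≤ conj' f z - conj' f y - ⟪T y, z - y⟫ ∧
      conj' f z - conj' f y - ⟪T y, z - y⟫ ≤ ⟪z - y, T z - T y⟫ := by
  have hcy := conj_eq hT y
  have hcz := conj_eq hT z
  constructor
  · have h1 : ⟪z, T y⟫ - f (T y) ≤ conj' f z := le_conj hT z (T y)
    have h2 : ⟪z, T y⟫ = ⟪y, T y⟫ + ⟪z - y, T y⟫ := by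
      rw [← inner_add_left]; congr 1; abel
    rw [real_inner_comm (T y) (z - y)] at h2
    rw [hcy]; rw [h2] at h1; linarith
  · -- convexity of f : first-order at T y
    have hconv : ConvexOn ℝ Set.univ f := hsc.convexOn (fun r => by positivity)
    have h1 := convex_first_order hf hconv (T y) (T z)
    rw [hT1 y] at h1
    -- f (T z) ≥ f (T y) + ⟪y, T z - T y⟫
    rw [hcy, hcz]
    have h2 : ⟪z, T z⟫ - ⟪y, T y⟫ - ⟪y, T z - T y⟫ - ⟪T y, z - y⟫ = ⟪z - y, T z - T y⟫ := by
      simp only [inner_sub_right, inner_sub_left, real_inner_comm (z - y) (T y)]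
      ring
    nlinarith [h1, h2]

lemma conj_hasGradientAt (hsc : StrongConvexOn Set.univ μ f) (hμ : 0 < μ)
    (hf : ∀ z, HasGradientAt f (f' z) z)
    (hT1 : ∀ y, f' (T y) = y) (hT : ∀ y z, ⟪y, z⟫ - f z ≤ ⟪y, T y⟫ - f (T y)) (y : E) :
    HasGradientAt (conj' f) (T y) y := by
  rw [hasGradientAt_iff_isLittleO]
  rw [Asymptotics.isLittleO_iff]
  intro c hc
  rw [Metric.eventually_nhds_iff]
  refine ⟨c * μ, by positivity, fun z hz => ?_⟩
  have hs := conj_sandwich hsc hμ hf hT1 hT y z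
  have hlip := T_lipschitz hμ hsc hf hT1 y z
  have hcs : ⟪z - y, T z - T y⟫ ≤ ‖z - y‖ * ‖T z - T y‖ := real_inner_le_norm _ _
  have hub : conj' f z - conj' f y - ⟪T y, z - y⟫ ≤ μ⁻¹ * ‖z - y‖ * ‖z - y‖ := by
    calc conj' f z - conj' f y - ⟪T y, z - y⟫ ≤ ⟪z - y, T z - T y⟫ := hs.2
      _ ≤ ‖z - y‖ * ‖T z - T y‖ := hcs
      _ ≤ ‖z - y‖ * (μ⁻¹ * ‖z - y‖) :=
          mul_le_mul_of_nonneg_left hlip (norm_nonneg _)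
      _ = μ⁻¹ * ‖z - y‖ * ‖z - y‖ := by ring
  have habs : ‖conj' f z - conj' f y - ⟪T y, z - y⟫‖
      = conj' f z - conj' f y - ⟪T y, z - y⟫ := by
    rw [Real.norm_eq_abs, abs_of_nonneg hs.1]
  rw [habs]
  have hd : ‖z - y‖ < c * μ := by rwa [dist_eq_norm] at hz
  have hmu : μ⁻¹ * μ = 1 := inv_mul_cancel₀ (ne_of_gt hμ)
  calc conj' f z - conj' f y - ⟪T y, z - y⟫ ≤ μ⁻¹ * ‖z - y‖ * ‖z - y‖ := hub
    _ ≤ c * ‖z - y‖ := by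
        have h5 : μ⁻¹ * ‖z - y‖ ≤ c := by
          calc μ⁻¹ * ‖z - y‖ ≤ μ⁻¹ * (c * μ) :=
                mul_le_mul_of_nonneg_left hd.le (le_of_lt (inv_pos.mpr hμ))
            _ = c := by field_simp
        exact mul_le_mul_of_nonneg_right h5 (norm_nonneg _)

end Conj2

section Conj3
set_option linter.unusedSectionVars false
variable [FiniteDimensional ℝ E] {f : E → ℝ} {f' : E → E} {μ L : ℝ} {T : E → E}

lemma conj_lower_quadratic (hL : 0 < L) (hf : ∀ z, HasGradientAt f (f' z) z)
    (hlip : LipschitzWith L.toNNReal f')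
    (hT1 : ∀ y, f' (T y) = y) (hT : ∀ y z, ⟪y, z⟫ - f z ≤ ⟪y, T y⟫ - f (T y)) (y z : E) :
    conj' f y + ⟪T y, z - y⟫ + 1 / (2 * L) * ‖z - y‖ ^ 2 ≤ conj' f z := by
  set xh : E := T y + (1 / L) • (z - y) with hxh
  have hdesc := descent_lemma hL hf hlip (T y) xh
  rw [hT1 y] at hdesc
  have he1 : xh - T y = (1 / L) • (z - y) := by simp [xh]
  rw [he1] at hdesc
  have he2 : ⟪y, (1 / L) • (z - y)⟫ = (1 / L) * ⟪y, z - y⟫ := real_inner_smul_right _ _ _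
  have he3 : ‖(1 / L) • (z - y)‖ ^ 2 = (1 / L) ^ 2 * ‖z - y‖ ^ 2 := by
    rw [norm_smul, Real.norm_eq_abs, abs_of_pos (by positivity : (0:ℝ) < 1 / L)]; ring
  rw [he2, he3] at hdesc
  have hle : ⟪z, xh⟫ - f xh ≤ conj' f z := le_conj hT z xh
  have hiz : ⟪z, xh⟫ = ⟪z, T y⟫ + (1 / L) * ⟪z, z - y⟫ := by
    simp [xh, inner_add_right, real_inner_smul_right]
  have hcy := conj_eq hT y
  -- combine
  have hzy : ⟪z, z - y⟫ - ⟪y, z - y⟫ = ‖z - y‖ ^ 2 := by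
    rw [← inner_sub_left, real_inner_self_eq_norm_sq]
  have hty : ⟪z, T y⟫ = ⟪y, T y⟫ + ⟪T y, z - y⟫ := by
    rw [show ⟪T y, z - y⟫ = ⟪z - y, T y⟫ from real_inner_comm (z - y) (T y),
      ← inner_add_left]
    congr 1; abel
  have hfin : conj' f y + ⟪T y, z - y⟫ + 1 / (2 * L) * ‖z - y‖ ^ 2
      ≤ ⟪z, xh⟫ - f xh := by
    rw [hiz, hcy, hty]
    have : f xh ≤ f (T y) + (1 / L) * ⟪y, z - y⟫ + L / 2 * ((1 / L) ^ 2 * ‖z - y‖ ^ 2) :=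
      hdesc
    have hLnz : (L:ℝ) ≠ 0 := ne_of_gt hL
    have hsq : L / 2 * ((1 / L) ^ 2 * ‖z - y‖ ^ 2) = 1 / (2 * L) * ‖z - y‖ ^ 2 := by
      field_simp
    rw [hsq] at this
    have h6 : 1 / L * ⟪z, z - y⟫ - 1 / L * ⟪y, z - y⟫ = 1 / L * ‖z - y‖ ^ 2 := by
      rw [← mul_sub, hzy]
    have h7 : 1 / L * ‖z - y‖ ^ 2 = 2 * (1 / (2 * L) * ‖z - y‖ ^ 2) := by
      field_simp
    linarith
  linarith

end Conj3

-- quadratic lower bound ⇒ strong convexity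
lemma strongConvexOn_of_quadratic_lower {G : E → ℝ} {g' : E → E} {c : ℝ}
    (h : ∀ w z : E, G w + ⟪g' w, z - w⟫ + c / 2 * ‖z - w‖ ^ 2 ≤ G z) :
    StrongConvexOn Set.univ c G := by
  refine ⟨convex_univ, ?_⟩
  rintro x - y - a b ha hb hab
  have hx := h (a • x + b • y) x
  have hy := h (a • x + b • y) y
  have hxz : x - (a • x + b • y) = b • (x - y) := by
    rw [show a = 1 - b by linarith]; module
  have hyz : y - (a • x + b • y) = a • (y - x) := by
    rw [show b = 1 - a by linarith]; module
  have hnx : ‖x - (a • x + b • y)‖ ^ 2 = b ^ 2 * ‖x - y‖ ^ 2 := by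
    rw [hxz, norm_smul, Real.norm_eq_abs, abs_of_nonneg hb]; ring
  have hny : ‖y - (a • x + b • y)‖ ^ 2 = a ^ 2 * ‖x - y‖ ^ 2 := by
    rw [hyz, norm_smul, Real.norm_eq_abs, abs_of_nonneg ha, norm_sub_rev y x]; ring
  have hinner : a * ⟪g' (a • x + b • y), x - (a • x + b • y)⟫
      + b * ⟪g' (a • x + b • y), y - (a • x + b • y)⟫ = 0 := by
    rw [hxz, hyz, real_inner_smul_right, real_inner_smul_right,
      show y - x = -(x - y) by abel, inner_neg_right]
    ring
  rw [hnx] at hx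
  rw [hny] at hy
  have h1 := add_le_add (mul_le_mul_of_nonneg_left hx ha) (mul_le_mul_of_nonneg_left hy hb)
  simp only [smul_eq_mul]
  have hb' : b = 1 - a := by linarith
  subst hb'
  nlinarith [h1, hinner]

section Spectral
variable {p n : ℕ} (A : Matrix (Fin p) (Fin n) ℝ) (hH : (A * A.transpose).IsHermitian)

lemma eig_nonneg (i : Fin p) : 0 ≤ hH.eigenvalues i := by
  have hP : (A * A.transpose).PosSemidef := by
    have := Matrix.posSemidef_self_mul_conjTranspose A
    rwa [Matrix.conjTranspose_eq_transpose_of_trivial] at this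
  exact hP.eigenvalues_nonneg i

lemma toEuclideanLin_eig (j : Fin p) :
    Matrix.toEuclideanLin (A * A.transpose) (hH.eigenvectorBasis j)
      = hH.eigenvalues j • hH.eigenvectorBasis j := by
  have h := hH.mulVec_eigenvectorBasis j
  apply (WithLp.equiv 2 (Fin p → ℝ)).injective
  show (A * A.transpose).mulVec (WithLp.equiv 2 (Fin p → ℝ) (hH.eigenvectorBasis j)) = _
  funext i
  have : (WithLp.equiv 2 (Fin p → ℝ)) (hH.eigenvectorBasis j) = ⇑(hH.eigenvectorBasis j) := rfl
  rw [this, h]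
  rfl

lemma rayleigh_bounds (v : EuclideanSpace ℝ (Fin p)) :
    (⨅ i, hH.eigenvalues i) * ‖v‖ ^ 2 ≤ ⟪v, Matrix.toEuclideanLin (A * A.transpose) v⟫ ∧
    ⟪v, Matrix.toEuclideanLin (A * A.transpose) v⟫ ≤ (⨆ i, hH.eigenvalues i) * ‖v‖ ^ 2 := by
  rcases isEmpty_or_nonempty (Fin p) with hp | hp
  · have hv : v = 0 := Subsingleton.elim v 0
    subst hv
    simp [Real.iSup_of_isEmpty, Real.iInf_of_isEmpty]
  · set lam := hH.eigenvalues with hlam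
    set b := hH.eigenvectorBasis with hb
    set Tl := Matrix.toEuclideanLin (A * A.transpose) with hTl
    have hsym : LinearMap.IsSymmetric Tl := Matrix.isHermitian_iff_isSymmetric.mp hH
    have hbj : ∀ j, ⟪b j, Tl v⟫ = lam j * ⟪b j, v⟫ := by
      intro j
      rw [← hsym (b j) v, toEuclideanLin_eig A hH j, real_inner_smul_left]
    have hexp : ⟪v, Tl v⟫ = ∑ j, lam j * ⟪b j, v⟫ ^ 2 := by
      rw [← b.sum_inner_mul_inner v (Tl v)]
      apply Finset.sum_congr rfl
      intro j _
      rw [hbj j, real_inner_comm v (b j)]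
      ring
    have hnorm : ‖v‖ ^ 2 = ∑ j, ⟪b j, v⟫ ^ 2 := by
      rw [← real_inner_self_eq_norm_sq, ← b.sum_inner_mul_inner v v]
      apply Finset.sum_congr rfl
      intro j _
      rw [real_inner_comm v (b j)]; ring
    have hbddA : BddAbove (Set.range lam) := (Set.finite_range lam).bddAbove
    have hbddB : BddBelow (Set.range lam) := (Set.finite_range lam).bddBelow
    constructor
    · rw [hexp, hnorm, Finset.mul_sum]
      apply Finset.sum_le_sum
      intro j _
      have := ciInf_le hbddB j
      nlinarith [sq_nonneg (⟪b j, v⟫ : ℝ)]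
    · rw [hexp, hnorm, Finset.mul_sum]
      apply Finset.sum_le_sum
      intro j _
      have := le_ciSup hbddA j
      nlinarith [sq_nonneg (⟪b j, v⟫ : ℝ)]

lemma toEuclideanLin_mul (v : EuclideanSpace ℝ (Fin p)) :
    Matrix.toEuclideanLin (A * A.transpose) v
      = Matrix.toEuclideanLin A (Matrix.toEuclideanLin A.transpose v) := by
  rw [Matrix.toEuclideanLin_apply, Matrix.toEuclideanLin_apply, Matrix.toEuclideanLin_apply]
  rw [WithLp.ofLp_toLp, Matrix.mulVec_mulVec]

lemma adjoint_transpose (w : EuclideanSpace ℝ (Fin p)) (x : EuclideanSpace ℝ (Fin n)) :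
    ⟪Matrix.toEuclideanLin A.transpose w, x⟫ = ⟪w, Matrix.toEuclideanLin A x⟫ := by
  have h : Matrix.toEuclideanLin A.transpose
      = LinearMap.adjoint (Matrix.toEuclideanLin A) := by
    rw [← Matrix.toEuclideanLin_conjTranspose_eq_adjoint,
      Matrix.conjTranspose_eq_transpose_of_trivial]
  rw [h, LinearMap.adjoint_inner_left]

end Spectral

section Norms
variable {p n : ℕ} (A : Matrix (Fin p) (Fin n) ℝ) (hH : (A * A.transpose).IsHermitian)

lemma lamMax_nonneg : 0 ≤ ⨆ i, hH.eigenvalues i := by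
  rcases isEmpty_or_nonempty (Fin p) with hp | hp
  · simp [Real.iSup_of_isEmpty]
  · obtain ⟨i⟩ := hp
    exact le_trans (eig_nonneg A hH i)
      (le_ciSup ((Set.finite_range _).bddAbove) i)

lemma lamMin_nonneg : 0 ≤ ⨅ i, hH.eigenvalues i := by
  rcases isEmpty_or_nonempty (Fin p) with hp | hp
  · simp [Real.iInf_of_isEmpty]
  · exact le_ciInf (fun i => eig_nonneg A hH i)

lemma norm_Bl_sq (w : EuclideanSpace ℝ (Fin p)) :
    ‖Matrix.toEuclideanLin A.transpose w‖ ^ 2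
      = ⟪w, Matrix.toEuclideanLin (A * A.transpose) w⟫ := by
  rw [← real_inner_self_eq_norm_sq, adjoint_transpose A, ← toEuclideanLin_mul A]

lemma norm_Bl_le (w : EuclideanSpace ℝ (Fin p)) :
    ‖Matrix.toEuclideanLin A.transpose w‖ ≤ Real.sqrt (⨆ i, hH.eigenvalues i) * ‖w‖ := by
  have h1 := (rayleigh_bounds A hH w).2
  rw [← norm_Bl_sq A] at h1
  have h2 : ‖Matrix.toEuclideanLin A.transpose w‖
      = Real.sqrt (‖Matrix.toEuclideanLin A.transpose w‖ ^ 2) := by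
    rw [Real.sqrt_sq (norm_nonneg _)]
  rw [h2]
  calc Real.sqrt (‖Matrix.toEuclideanLin A.transpose w‖ ^ 2)
      ≤ Real.sqrt ((⨆ i, hH.eigenvalues i) * ‖w‖ ^ 2) := Real.sqrt_le_sqrt h1
    _ = Real.sqrt (⨆ i, hH.eigenvalues i) * ‖w‖ := by
        rw [Real.sqrt_mul (lamMax_nonneg A hH), Real.sqrt_sq (norm_nonneg _)]

lemma norm_Cl_le (x : EuclideanSpace ℝ (Fin n)) :
    ‖Matrix.toEuclideanLin A x‖ ≤ Real.sqrt (⨆ i, hH.eigenvalues i) * ‖x‖ := by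
  set Cx := Matrix.toEuclideanLin A x with hCx
  have h1 : ‖Cx‖ ^ 2 = ⟪Matrix.toEuclideanLin A.transpose Cx, x⟫ := by
    rw [← real_inner_self_eq_norm_sq, adjoint_transpose A]
  have h2 : ⟪Matrix.toEuclideanLin A.transpose Cx, x⟫
      ≤ Real.sqrt (⨆ i, hH.eigenvalues i) * ‖Cx‖ * ‖x‖ := by
    calc ⟪Matrix.toEuclideanLin A.transpose Cx, x⟫
        ≤ ‖Matrix.toEuclideanLin A.transpose Cx‖ * ‖x‖ := real_inner_le_norm _ _
      _ ≤ Real.sqrt (⨆ i, hH.eigenvalues i) * ‖Cx‖ * ‖x‖ :=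
          mul_le_mul_of_nonneg_right (norm_Bl_le A hH Cx) (norm_nonneg _)
  rcases eq_or_lt_of_le (norm_nonneg Cx) with h0 | h0
  · rw [← h0]
    positivity
  · have h3 : ‖Cx‖ ^ 2 ≤ Real.sqrt (⨆ i, hH.eigenvalues i) * ‖Cx‖ * ‖x‖ := by
      rw [h1]; exact h2
    nlinarith [h0]

end Norms

theorem dual_function_properties {n p : ℕ} (f : EuclideanSpace ℝ (Fin n) → ℝ)
    (μ L : ℝ) (hμ : 0 < μ) (hL : 0 < L)
    (hsc : StrongConvexOn Set.univ μ f) (hsm : IsSmoothFn L f)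
    (A : Matrix (Fin p) (Fin n) ℝ)
    (hH : (A * A.transpose).IsHermitian)
    -- the dual function d(w) = f*(Aᵀ w)
    (d : EuclideanSpace ℝ (Fin p) → ℝ)
    (hd : ∀ w, d w = conjFn f
      ((WithLp.equiv 2 (Fin n → ℝ)).symm (A.transpose.mulVec (WithLp.equiv 2 (Fin p → ℝ) w)))) :
    Differentiable ℝ d ∧
    IsSmoothFn ((⨆ i, hH.eigenvalues i) / μ) d ∧
    StrongConvexOn Set.univ ((⨅ i, hH.eigenvalues i) / L) d := by
  obtain ⟨f', hf, hlip⟩ := hsm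
  have hex := exists_argmax hμ hsc hf
  choose T hT1 hT2 using hex
  have hadj : ∀ (u : EuclideanSpace ℝ (Fin n)) (v : EuclideanSpace ℝ (Fin p)),
      ⟪Matrix.toEuclideanLin A u, v⟫ = ⟪u, Matrix.toEuclideanLin A.transpose v⟫ := by
    intro u v
    calc ⟪Matrix.toEuclideanLin A u, v⟫ = ⟪v, Matrix.toEuclideanLin A u⟫ := real_inner_comm _ _
      _ = ⟪Matrix.toEuclideanLin A.transpose v, u⟫ := (adjoint_transpose A v u).symm
      _ = ⟪u, Matrix.toEuclideanLin A.transpose v⟫ := real_inner_comm _ _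
  have heq : d = conj' f ∘
      ⇑(LinearMap.toContinuousLinearMap (Matrix.toEuclideanLin A.transpose)) := by
    funext w
    rw [hd w]
    rfl
  set d' : EuclideanSpace ℝ (Fin p) → EuclideanSpace ℝ (Fin p) :=
    fun w => Matrix.toEuclideanLin A (T (Matrix.toEuclideanLin A.transpose w)) with hd'def
  have hgrad : ∀ w, HasGradientAt d (d' w) w := by
    intro w
    rw [hasGradientAt_iff_hasFDerivAt, heq]
    have hB := (LinearMap.toContinuousLinearMap (Matrix.toEuclideanLin A.transpose)).hasFDerivAt
      (x := w)
    have hc := (conj_hasGradientAt hsc hμ hf hT1 hT2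
      ((LinearMap.toContinuousLinearMap (Matrix.toEuclideanLin A.transpose)) w)).hasFDerivAt
    have hcomp := hc.comp w hB
    have hclm : toDual ℝ (EuclideanSpace ℝ (Fin p)) (d' w)
        = (toDual ℝ (EuclideanSpace ℝ (Fin n))
            (T ((LinearMap.toContinuousLinearMap (Matrix.toEuclideanLin A.transpose)) w))).comp
          (LinearMap.toContinuousLinearMap (Matrix.toEuclideanLin A.transpose)) := by
      apply ContinuousLinearMap.ext
      intro v
      simp only [ContinuousLinearMap.comp_apply, toDual_apply_apply, hd'def]
      exact hadj _ v
    rw [hclm]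
    exact hcomp
  have hlamx := lamMax_nonneg A hH
  have hlamn := lamMin_nonneg A hH
  refine ⟨fun w => ((hgrad w).hasFDerivAt).differentiableAt, ⟨d', hgrad, ?_⟩, ?_⟩
  · -- Lipschitz of d'
    apply LipschitzWith.of_dist_le_mul
    intro w1 w2
    rw [dist_eq_norm, dist_eq_norm,
      Real.coe_toNNReal _ (div_nonneg hlamx hμ.le)]
    have hTl := T_lipschitz hμ hsc hf hT1
      (Matrix.toEuclideanLin A.transpose w2) (Matrix.toEuclideanLin A.transpose w1)
    have hss := Real.mul_self_sqrt hlamx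
    calc ‖d' w1 - d' w2‖
        = ‖Matrix.toEuclideanLin A (T (Matrix.toEuclideanLin A.transpose w1)
            - T (Matrix.toEuclideanLin A.transpose w2))‖ := by
          rw [map_sub]
      _ ≤ Real.sqrt (⨆ i, hH.eigenvalues i)
            * ‖T (Matrix.toEuclideanLin A.transpose w1)
                - T (Matrix.toEuclideanLin A.transpose w2)‖ := norm_Cl_le A hH _
      _ ≤ Real.sqrt (⨆ i, hH.eigenvalues i)
            * (μ⁻¹ * ‖Matrix.toEuclideanLin A.transpose w1
                - Matrix.toEuclideanLin A.transpose w2‖) :=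
          mul_le_mul_of_nonneg_left hTl (Real.sqrt_nonneg _)
      _ = Real.sqrt (⨆ i, hH.eigenvalues i)
            * (μ⁻¹ * ‖Matrix.toEuclideanLin A.transpose (w1 - w2)‖) := by
          rw [map_sub]
      _ ≤ Real.sqrt (⨆ i, hH.eigenvalues i)
            * (μ⁻¹ * (Real.sqrt (⨆ i, hH.eigenvalues i) * ‖w1 - w2‖)) := by
          apply mul_le_mul_of_nonneg_left _ (Real.sqrt_nonneg _)
          exact mul_le_mul_of_nonneg_left (norm_Bl_le A hH _) (by positivity)
      _ = (⨆ i, hH.eigenvalues i) / μ * ‖w1 - w2‖ := by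
          rw [div_eq_mul_inv]
          linear_combination (μ⁻¹ * ‖w1 - w2‖) * hss
  · -- strong convexity
    apply strongConvexOn_of_quadratic_lower (g' := d')
    intro w z
    have hq := conj_lower_quadratic hL hf hlip hT1 hT2
      (Matrix.toEuclideanLin A.transpose w) (Matrix.toEuclideanLin A.transpose z)
    rw [← map_sub] at hq
    have hinner : ⟪d' w, z - w⟫
        = ⟪T (Matrix.toEuclideanLin A.transpose w),
            Matrix.toEuclideanLin A.transpose (z - w)⟫ := hadj _ _
    have hmin := (rayleigh_bounds A hH (z - w)).1
    have hBn : (⨅ i, hH.eigenvalues i) * ‖z - w‖ ^ 2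
        ≤ ‖Matrix.toEuclideanLin A.transpose (z - w)‖ ^ 2 := by
      rw [norm_Bl_sq A]
      exact hmin
    have hdw : d w = conj' f (Matrix.toEuclideanLin A.transpose w) := by rw [hd w]; rfl
    have hdz : d z = conj' f (Matrix.toEuclideanLin A.transpose z) := by rw [hd z]; rfl
    rw [hdw, hdz, hinner]
    have hcoef : (⨅ i, hH.eigenvalues i) / L / 2 * ‖z - w‖ ^ 2
        ≤ 1 / (2 * L) * ‖Matrix.toEuclideanLin A.transpose (z - w)‖ ^ 2 := by
      have h1 : (0:ℝ) ≤ 1 / (2 * L) := by positivity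
      have h2 := mul_le_mul_of_nonneg_left hBn h1
      calc (⨅ i, hH.eigenvalues i) / L / 2 * ‖z - w‖ ^ 2
          = 1 / (2 * L) * ((⨅ i, hH.eigenvalues i) * ‖z - w‖ ^ 2) := by
            rw [div_div, one_div, mul_comm L 2]
            ring
        _ ≤ 1 / (2 * L) * ‖Matrix.toEuclideanLin A.transpose (z - w)‖ ^ 2 := h2
    linarith
end

section
/- For the Peaceman–Rachford/ADMM recursion applied to the regularized dual, the x-update x = argmin_x { f(x) + (ρδ/2)‖Ax − z/ρ‖² } together with w = δ(z − ρAx), where δ = 1/(1+ερ), computes exactly w = prox_{ρ d_ε}(z) for d_ε(w) = (ε/2)‖w‖² + f*(Aᵀw), provided f is strongly convex and smooth. -/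
open scoped RealInnerProductSpace

noncomputable def mulVecE {p n : ℕ} (M : Matrix (Fin p) (Fin n) ℝ)
    (v : EuclideanSpace ℝ (Fin n)) : EuclideanSpace ℝ (Fin p) :=
  (WithLp.equiv 2 (Fin p → ℝ)).symm (M.mulVec (WithLp.equiv 2 (Fin n → ℝ) v))

section Aux

variable {n p : ℕ}

private lemma mulVecE_add (A : Matrix (Fin p) (Fin n) ℝ) (a b : EuclideanSpace ℝ (Fin n)) :
    mulVecE A (a + b) = mulVecE A a + mulVecE A b := by
  ext i; simp [mulVecE, Matrix.mulVec_add]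

private lemma mulVecE_smul (A : Matrix (Fin p) (Fin n) ℝ) (t : ℝ) (a : EuclideanSpace ℝ (Fin n)) :
    mulVecE A (t • a) = t • mulVecE A a := by
  ext i; simp [mulVecE, Matrix.mulVec_smul]

private lemma mulVecE_sub (A : Matrix (Fin p) (Fin n) ℝ) (a b : EuclideanSpace ℝ (Fin n)) :
    mulVecE A (a - b) = mulVecE A a - mulVecE A b := by
  ext i; simp [mulVecE, Matrix.mulVec_sub]

open Matrix in
private lemma inner_mulVecE (A : Matrix (Fin p) (Fin n) ℝ) (v : EuclideanSpace ℝ (Fin p))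
    (y : EuclideanSpace ℝ (Fin n)) :
    ⟪mulVecE A.transpose v, y⟫ = ⟪v, mulVecE A y⟫ := by
  simp only [mulVecE, PiLp.inner_apply, RCLike.inner_apply, starRingEnd_apply, star_trivial]
  calc _ = (∑ i, (Aᵀ.mulVec v) i * y i) := Finset.sum_congr rfl fun i _ => mul_comm _ _
    _ = (Aᵀ.mulVec v) ⬝ᵥ (y : Fin n → ℝ) := rfl
    _ = (Matrix.vecMul v A) ⬝ᵥ (y : Fin n → ℝ) := by rw [Matrix.mulVec_transpose]
    _ = (v : Fin p → ℝ) ⬝ᵥ A.mulVec y := (Matrix.dotProduct_mulVec _ _ _).symm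
    _ = ∑ j, v j * A.mulVec (y : Fin n → ℝ) j := rfl
    _ = _ := Finset.sum_congr rfl fun i _ => mul_comm _ _

private lemma quad_min (ε ρ : ℝ) (hε : 0 < ε) (hρ : 0 < ρ)
    (z w v q : EuclideanSpace ℝ (Fin p))
    (hq : (1 + ε * ρ) • w = z - ρ • q) :
    ε / 2 * ‖w‖ ^ 2 + ⟪w, q⟫ + ‖w - z‖ ^ 2 / (2 * ρ) ≤
      ε / 2 * ‖v‖ ^ 2 + ⟪v, q⟫ + ‖v - z‖ ^ 2 / (2 * ρ) := by
  have h1 : ‖v‖ ^ 2 = ‖v - w‖ ^ 2 + 2 * ⟪v - w, w⟫ + ‖w‖ ^ 2 := by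
    have := norm_add_sq_real (v - w) w; simpa using this
  have h2 : ‖v - z‖ ^ 2 = ‖v - w‖ ^ 2 + 2 * ⟪v - w, w - z⟫ + ‖w - z‖ ^ 2 := by
    have := norm_add_sq_real (v - w) (w - z); rw [sub_add_sub_cancel] at this; exact this
  have h3 : ⟪v, q⟫ = ⟪v - w, q⟫ + ⟪w, q⟫ := by rw [inner_sub_left]; ring
  have h4 : (1 + ε * ρ) * ⟪v - w, w⟫ = ⟪v - w, z⟫ - ρ * ⟪v - w, q⟫ := by
    have := congrArg (fun u => ⟪v - w, u⟫) hq
    simpa [inner_smul_right, inner_sub_right] using this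
  have h5 : ⟪v - w, w - z⟫ = ⟪v - w, w⟫ - ⟪v - w, z⟫ := inner_sub_right _ _ _
  have expand' : (ε * ρ * ‖v‖ ^ 2 + 2 * ρ * ⟪v, q⟫ + ‖v - z‖ ^ 2)
      - (ε * ρ * ‖w‖ ^ 2 + 2 * ρ * ⟪w, q⟫ + ‖w - z‖ ^ 2)
      = (ε * ρ + 1) * ‖v - w‖ ^ 2 := by
    linear_combination (ε * ρ) * h1 + (2 * ρ) * h3 + h2 + 2 * h4 + 2 * h5
  rw [← sub_nonneg]
  have hfin : ε / 2 * ‖v‖ ^ 2 + ⟪v, q⟫ + ‖v - z‖ ^ 2 / (2 * ρ)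
      - (ε / 2 * ‖w‖ ^ 2 + ⟪w, q⟫ + ‖w - z‖ ^ 2 / (2 * ρ))
      = ((ε * ρ + 1) * ‖v - w‖ ^ 2) / (2 * ρ) := by
    have hI : (2 * ρ) * (2 * ρ)⁻¹ = 1 := mul_inv_cancel₀ (by linarith)
    rw [div_eq_mul_inv, div_eq_mul_inv, div_eq_mul_inv]
    linear_combination (2 * ρ)⁻¹ * expand'
      + (ε / 2 * (‖w‖ ^ 2 - ‖v‖ ^ 2) + ⟪w, q⟫ - ⟪v, q⟫) * hI
  rw [hfin]
  positivity

private lemma strong_subgrad (f : EuclideanSpace ℝ (Fin n) → ℝ) (μ : ℝ) (hμ : 0 < μ)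
    (hsc : StrongConvexOn Set.univ μ f)
    (A : Matrix (Fin p) (Fin n) ℝ) (c : ℝ) (hc : 0 < c)
    (u : EuclideanSpace ℝ (Fin p)) (x : EuclideanSpace ℝ (Fin n))
    (hx : IsMinOn (fun x' => f x' + c / 2 * ‖mulVecE A x' - u‖ ^ 2) Set.univ x)
    (w : EuclideanSpace ℝ (Fin p)) (hw : w = c • (u - mulVecE A x))
    (y : EuclideanSpace ℝ (Fin n)) :
    ⟪w, mulVecE A y - mulVecE A x⟫ + μ / 2 * ‖y - x‖ ^ 2 ≤ f y - f x := by
  set Ad := mulVecE A y - mulVecE A x with hAd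
  have hwa : w = (-c) • (mulVecE A x - u) := by rw [hw]; module
  have hwAd : ⟪w, Ad⟫ = -(c * ⟪mulVecE A x - u, Ad⟫) := by
    rw [hwa, real_inner_smul_left]; ring
  refine le_of_forall_pos_le_add ?_
  intro η hη
  set K := μ / 2 * ‖y - x‖ ^ 2 + c / 2 * ‖Ad‖ ^ 2 with hKdef
  have hK0 : 0 ≤ K := by positivity
  set t := min 1 (η / (K + 1)) with htdef
  have ht0 : 0 < t := lt_min one_pos (div_pos hη (by linarith))
  have ht1 : t ≤ 1 := min_le_left _ _
  have htK : t * K ≤ η := by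
    have h1 : t ≤ η / (K + 1) := min_le_right _ _
    have h2 : t * K ≤ (η / (K + 1)) * K := mul_le_mul_of_nonneg_right h1 hK0
    have h3 : (η / (K + 1)) * K ≤ η := by
      rw [div_mul_eq_mul_div, div_le_iff₀ (by linarith)]; nlinarith
    exact h2.trans h3
  have hcvx := hsc.2 (Set.mem_univ x) (Set.mem_univ y)
    (sub_nonneg.mpr ht1) ht0.le (by ring : (1 - t) + t = 1)
  simp only [smul_eq_mul] at hcvx
  have hmin := isMinOn_iff.mp hx ((1 - t) • x + t • y) (Set.mem_univ _)
  have hAlin : mulVecE A ((1 - t) • x + t • y) - u = (mulVecE A x - u) + t • Ad := by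
    rw [mulVecE_add, mulVecE_smul, mulVecE_smul, hAd]; module
  rw [hAlin] at hmin
  have hexp : ‖(mulVecE A x - u) + t • Ad‖ ^ 2
      = ‖mulVecE A x - u‖ ^ 2 + 2 * (t * ⟪mulVecE A x - u, Ad⟫) + t ^ 2 * ‖Ad‖ ^ 2 := by
    rw [norm_add_sq_real, real_inner_smul_right, norm_smul]
    simp [mul_pow, sq_abs]
  rw [hexp] at hmin
  have hns : ‖x - y‖ = ‖y - x‖ := norm_sub_rev _ _
  rw [hns] at hcvx
  have key : t * (⟪w, Ad⟫ + μ / 2 * ‖y - x‖ ^ 2) ≤ t * (f y - f x + η) := by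
    have hprod : 0 ≤ t * (η - t * K) := mul_nonneg ht0.le (by linarith)
    rw [hwAd, hKdef] at *
    nlinarith [hmin, hcvx, hprod, ht0]
  have := (mul_le_mul_iff_of_pos_left ht0).mp key
  linarith

end Aux

theorem x_update_computes_prox {n p : ℕ}
    (f : EuclideanSpace ℝ (Fin n) → ℝ)
    (μ L : ℝ) (hμ : 0 < μ) (hL : 0 < L)
    (hsc : StrongConvexOn Set.univ μ f) (hsm : IsSmoothFn L f)
    (A : Matrix (Fin p) (Fin n) ℝ)
    (ρ ε δ : ℝ) (hρ : 0 < ρ) (hε : 0 < ε) (hδ : δ = 1 / (1 + ε * ρ))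
    (z : EuclideanSpace ℝ (Fin p)) (x : EuclideanSpace ℝ (Fin n))
    -- x = argmin_x { f(x) + (ρδ/2)‖Ax − z/ρ‖² }
    (hx : IsMinOn (fun x' => f x' + ρ * δ / 2 * ‖mulVecE A x' - (1 / ρ) • z‖ ^ 2) Set.univ x)
    (w : EuclideanSpace ℝ (Fin p))
    (hw : w = δ • (z - ρ • mulVecE A x)) :
    -- w = prox_{ρ d_ε}(z) for d_ε(v) = (ε/2)‖v‖² + f*(Aᵀv)
    IsMinOn (fun v => (ε / 2 * ‖v‖ ^ 2 + conjFn f (mulVecE A.transpose v))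
      + ‖v - z‖ ^ 2 / (2 * ρ)) Set.univ w := by
  have hone : 0 < 1 + ε * ρ := by nlinarith
  have hδpos : 0 < δ := by rw [hδ]; positivity
  have hc : 0 < ρ * δ := mul_pos hρ hδpos
  have hρδ : ρ * δ * (1 / ρ) = δ := by field_simp
  -- rewrite w in the form needed for strong_subgrad
  have hw' : w = (ρ * δ) • ((1 / ρ) • z - mulVecE A x) := by
    rw [hw, smul_sub, smul_sub, smul_smul, smul_smul, hρδ, mul_comm δ ρ]
  have hsg := strong_subgrad f μ hμ hsc A (ρ * δ) hc ((1 / ρ) • z) x hx w hw'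
  -- value of the conjugate at Aᵀw
  have hub : ∀ y, ⟪mulVecE A.transpose w, y⟫ - f y ≤ ⟪w, mulVecE A x⟫ - f x := by
    intro y
    have h1 := hsg y
    have h2 : ⟪w, mulVecE A y - mulVecE A x⟫ = ⟪w, mulVecE A y⟫ - ⟪w, mulVecE A x⟫ :=
      inner_sub_right _ _ _
    have h3 : (0:ℝ) ≤ μ / 2 * ‖y - x‖ ^ 2 := by positivity
    rw [inner_mulVecE]
    linarith
  have hBw : conjFn f (mulVecE A.transpose w) = ⟪w, mulVecE A x⟫ - f x := by
    refine le_antisymm (ciSup_le hub) ?_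
    have hbdd : BddAbove (Set.range fun y => ⟪mulVecE A.transpose w, y⟫ - f y) := by
      refine ⟨⟪w, mulVecE A x⟫ - f x, ?_⟩
      rintro _ ⟨y, rfl⟩
      exact hub y
    have := le_ciSup hbdd x
    rw [inner_mulVecE] at this
    exact this
  -- lower bound for the conjugate at Aᵀv
  have hlb : ∀ v : EuclideanSpace ℝ (Fin p),
      ⟪v, mulVecE A x⟫ - f x ≤ conjFn f (mulVecE A.transpose v) := by
    intro v
    have hbdd : BddAbove (Set.range fun y => ⟪mulVecE A.transpose v, y⟫ - f y) := by
      set s := mulVecE A.transpose (v - w) with hs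
      refine ⟨⟪s, x⟫ + ⟪w, mulVecE A x⟫ - f x + ‖s‖ ^ 2 / (2 * μ), ?_⟩
      rintro _ ⟨y, rfl⟩
      have h1 := hsg y
      have h2 : ⟪mulVecE A.transpose v, y⟫
          = ⟪s, y - x⟫ + ⟪s, x⟫ + ⟪w, mulVecE A y⟫ := by
        simp only [hs, mulVecE_sub, inner_sub_left, inner_sub_right, inner_mulVecE]
        ring
      have h3 : ⟪s, y - x⟫ ≤ ‖s‖ * ‖y - x‖ := real_inner_le_norm _ _
      have h4 : ‖s‖ * ‖y - x‖ - μ / 2 * ‖y - x‖ ^ 2 ≤ ‖s‖ ^ 2 / (2 * μ) := by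
        rw [sub_le_iff_le_add, ← sub_nonneg]
        have hkey : ‖s‖ ^ 2 / (2 * μ) + μ / 2 * ‖y - x‖ ^ 2 - ‖s‖ * ‖y - x‖
            = (μ / 2) * (‖y - x‖ - ‖s‖ / μ) ^ 2 := by
          field_simp
          ring
        rw [hkey]
        positivity
      have h5 : ⟪w, mulVecE A y - mulVecE A x⟫
          = ⟪w, mulVecE A y⟫ - ⟪w, mulVecE A x⟫ := inner_sub_right _ _ _
      linarith
    have := le_ciSup hbdd x
    rw [inner_mulVecE] at this
    exact this
  -- final assembly
  refine isMinOn_iff.mpr fun v _ => ?_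
  have hq : (1 + ε * ρ) • w = z - ρ • mulVecE A x := by
    rw [hw, smul_smul, hδ]
    rw [show (1 + ε * ρ) * (1 / (1 + ε * ρ)) = 1 by field_simp]
    rw [one_smul]
  have hquad := quad_min ε ρ hε hρ z w v (mulVecE A x) hq
  have h1 := hlb v
  linarith [hquad, h1, hBw.le, hBw.ge]
end
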